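/- Let L be symmetric positive definite on indices [n] partitioned into I and Ī, with K := L^{-1}. Then the nuclear norm of the Nyström error equals the trace of the inverse of the principal block: ‖K - K_{:,I} K_{I,I}^{-1} K_{I,:}‖_* = Tr[(L_{Ī,Ī})^{-1}]. -/

import Mathlib

open Matrix

/-- The nuclear (trace) norm of a matrix: the sum of its singular values, i.e. of the
square roots of the eigenvalues of `Aᵀ A`. -/
noncomputable def nuclearNorm {m n : Type*} [Fintype m] [Fintype n] [DecidableEq n]
    (A : Matrix m n ℝ) : ℝ :=
  ∑ i, Real.sqrt ((Matrix.isHermitian_conjTranspose_mul_self A).eigenvalues i)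

lemma eigenvalues_congr' {n : Type*} [Fintype n] [DecidableEq n]
    {A B : Matrix n n ℝ} (hA : A.IsHermitian) (hB : B.IsHermitian) (h : A = B) (i : n) :
    hA.eigenvalues i = hB.eigenvalues i := by subst h; rfl

lemma real_transpose_eq_of_isHermitian {m : Type*} {M : Matrix m m ℝ} (h : M.IsHermitian) :
    Mᵀ = M := by
  ext i j
  simpa using congrFun (congrFun h i) j

lemma real_conjTranspose_eq_transpose {m l : Type*} (M : Matrix m l ℝ) : Mᴴ = Mᵀ := by
  ext i j; simp [conjTranspose_apply]

lemma trace_sqrt_psd {n : Type*} [Fintype n] [DecidableEq n] {A : Matrix n n ℝ}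
    (hA : A.PosSemidef) : (hA.1.cfc Real.sqrt).trace = ∑ i, Real.sqrt (hA.1.eigenvalues i) := by
  rw [Matrix.IsHermitian.cfc, Unitary.conjStarAlgAut_apply, Matrix.trace_mul_comm, ← Matrix.mul_assoc,
    Unitary.star_mul_self_of_mem hA.1.eigenvectorUnitary.2, one_mul,
    trace_diagonal]
  simp

open scoped MatrixOrder in
lemma nuclearNorm_of_posSemidef {n : Type*} [Fintype n] [DecidableEq n]
    {M : Matrix n n ℝ} (hM : M.PosSemidef) : nuclearNorm M = M.trace := by
  have hMT : Mᵀ = M := real_transpose_eq_of_isHermitian hM.1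
  have e : Mᵀ * M = M ^ 2 := by rw [hMT, pow_two]
  have hN : (M ^ 2).PosSemidef := hM.pow 2
  have hMs : M = hN.1.cfc Real.sqrt := by
    have h := CFC.sqrt_sq M hM.nonneg
    rw [CFC.sqrt_eq_real_sqrt (M ^ 2) hN.nonneg, cfcₙ_eq_cfc, hN.1.cfc_eq] at h
    exact h.symm
  calc nuclearNorm M = ∑ i, Real.sqrt (hN.1.eigenvalues i) := by
        unfold nuclearNorm
        exact Finset.sum_congr rfl fun i _ => by
          rw [eigenvalues_congr' (Matrix.isHermitian_conjTranspose_mul_self M) hN.1 e]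
    _ = (hN.1.cfc Real.sqrt).trace := (trace_sqrt_psd hN).symm
    _ = M.trace := by rw [← hMs]

lemma mul_oneSub' {k l m : Type*} [Fintype m] [Fintype k] [DecidableEq m]
    (M : Matrix l m ℝ) (f : k → m) :
    M * (1 : Matrix m m ℝ).submatrix id f = M.submatrix id f := by
  ext i a
  simp [Matrix.mul_apply, Matrix.one_apply]

lemma oneSub_mul' {k l m : Type*} [Fintype m] [Fintype l] [DecidableEq m]
    (M : Matrix m l ℝ) (f : k → m) :
    (1 : Matrix m m ℝ).submatrix f id * M = M.submatrix f id := by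
  ext a j
  simp [Matrix.mul_apply, Matrix.one_apply]

lemma posDef_submatrix_val {n : ℕ} {K : Matrix (Fin n) (Fin n) ℝ} (hK : K.PosDef)
    (s : Finset (Fin n)) :
    (K.submatrix (Subtype.val : s → Fin n) (Subtype.val : s → Fin n)).PosDef := by
  rw [posDef_iff_dotProduct_mulVec]
  constructor
  · rw [Matrix.IsHermitian, conjTranspose_submatrix, hK.1]
  · intro x hx
    set y : Fin n → ℝ := fun i => if h : i ∈ s then x ⟨i, h⟩ else 0 with hy
    have hyv : ∀ a : s, y (a : Fin n) = x a := fun a => by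
      rw [hy]; simp
    have hy0 : ∀ i : Fin n, i ∉ s → y i = 0 := fun i hi => by
      rw [hy]; simp [hi]
    have hyne : y ≠ 0 := by
      intro h0
      apply hx
      funext a
      have := congrFun h0 (a : Fin n)
      rwa [hyv a] at this
    have hsum : ∀ g : Fin n → ℝ, ∑ i, y i * g i = ∑ a : s, x a * g (a : Fin n) := by
      intro g
      calc ∑ i : Fin n, y i * g i
          = ∑ i ∈ s, y i * g i :=
            (Finset.sum_subset (Finset.subset_univ s) fun i _ hi => by
              rw [hy0 i hi, zero_mul]).symm
        _ = ∑ a : s, y (a : Fin n) * g (a : Fin n) :=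
            (Finset.sum_coe_sort s (fun i => y i * g i)).symm
        _ = ∑ a : s, x a * g (a : Fin n) :=
            Finset.sum_congr rfl fun a _ => by rw [hyv a]
    have key : dotProduct (star x)
        ((K.submatrix (Subtype.val : s → Fin n) Subtype.val) *ᵥ x)
        = dotProduct (star y) (K *ᵥ y) := by
      simp only [dotProduct, mulVec, star_apply, star_trivial]
      rw [hsum (fun i => ∑ j, K i j * y j)]
      refine Finset.sum_congr rfl fun a _ => ?_
      congr 1
      rw [show (∑ j, K (a:Fin n) j * y j) = ∑ j, y j * K (a:Fin n) j from
        Finset.sum_congr rfl fun j _ => mul_comm _ _,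
        hsum (fun j => K (a:Fin n) j)]
      refine Finset.sum_congr rfl fun b _ => ?_
      simp [Matrix.submatrix_apply, mul_comm]
    rw [key]
    exact hK.dotProduct_mulVec_pos hyne

/-- **Nuclear Nyström error via Schur complement.**
Let `L` be symmetric positive definite with `K := L⁻¹`, and let `s`, `sᶜ` partition the
indices.  Then the nuclear norm of the Nyström error equals the trace of the inverse of the
complementary principal block of `L`:
`‖K - K_{:,s} (K_{s,s})⁻¹ K_{s,:}‖_* = Tr[(L_{sᶜ,sᶜ})⁻¹]`. -/
theorem nuclearNorm_nystrom_error_eq_trace {n : ℕ} (L : Matrix (Fin n) (Fin n) ℝ)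
    (hL : L.PosDef) (s : Finset (Fin n)) :
    letI K := L⁻¹
    nuclearNorm
        (K - K.submatrix id (Subtype.val : s → Fin n) *
          (K.submatrix (Subtype.val : s → Fin n) (Subtype.val : s → Fin n))⁻¹ *
          K.submatrix (Subtype.val : s → Fin n) id) =
      Matrix.trace
        ((L.submatrix (Subtype.val : (sᶜ : Finset (Fin n)) → Fin n)
          (Subtype.val : (sᶜ : Finset (Fin n)) → Fin n))⁻¹) := by
  classical
  show nuclearNorm
        (L⁻¹ - (L⁻¹).submatrix id (Subtype.val : s → Fin n) *
          ((L⁻¹).submatrix (Subtype.val : s → Fin n) (Subtype.val : s → Fin n))⁻¹ *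
          (L⁻¹).submatrix (Subtype.val : s → Fin n) id) =
      Matrix.trace
        ((L.submatrix (Subtype.val : (sᶜ : Finset (Fin n)) → Fin n)
          (Subtype.val : (sᶜ : Finset (Fin n)) → Fin n))⁻¹)
  have hK : (L⁻¹).PosDef := hL.inv
  set K := L⁻¹ with hKdef
  set v : s → Fin n := Subtype.val with hv
  set P : Matrix (Fin n) s ℝ := (1 : Matrix (Fin n) (Fin n) ℝ).submatrix id v with hPdef
  have hPT : Pᵀ = (1 : Matrix (Fin n) (Fin n) ℝ).submatrix v id := by
    rw [hPdef, transpose_submatrix, transpose_one]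
  set S := K.submatrix v v with hSdef
  have hS : S.PosDef := posDef_submatrix_val hK s
  have hSd : IsUnit S.det := hS.det_pos.ne'.isUnit
  have hSS : S * S⁻¹ = 1 := Matrix.mul_nonsing_inv _ hSd
  have hS'S : S⁻¹ * S = 1 := Matrix.nonsing_inv_mul _ hSd
  have hKT : Kᵀ = K := real_transpose_eq_of_isHermitian hK.1
  have hST : Sᵀ = S := real_transpose_eq_of_isHermitian hS.1
  have hSiT : (S⁻¹)ᵀ = S⁻¹ := by rw [Matrix.transpose_nonsing_inv, hST]
  have hKidv : K.submatrix id v = K * P := (mul_oneSub' K v).symm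
  have hKvid : K.submatrix v id = Pᵀ * K := by rw [hPT, oneSub_mul']
  have hSeq : S = Pᵀ * K * P := by
    rw [← hKvid, hPdef, mul_oneSub', Matrix.submatrix_submatrix, hSdef]
    simp
  set E := K - K.submatrix id v * S⁻¹ * K.submatrix v id with hEdef
  have hEfull : E = K - K * (P * (S⁻¹ * (Pᵀ * K))) := by
    rw [hEdef, hKidv, hKvid]
    simp only [Matrix.mul_assoc]
  set W : Matrix (Fin n) (Fin n) ℝ := 1 - P * (S⁻¹ * (Pᵀ * K)) with hWdef
  have hWT : Wᵀ = 1 - K * P * S⁻¹ * Pᵀ := by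
    rw [hWdef]
    simp only [transpose_sub, transpose_one, transpose_mul, transpose_transpose, hSiT, hKT,
      Matrix.mul_assoc]
  have h1 : Pᵀ * (K * (P * (S⁻¹ * (Pᵀ * K)))) = S * (S⁻¹ * (Pᵀ * K)) := by
    calc Pᵀ * (K * (P * (S⁻¹ * (Pᵀ * K)))) = (Pᵀ * K * P) * (S⁻¹ * (Pᵀ * K)) := by
          simp only [Matrix.mul_assoc]
      _ = S * (S⁻¹ * (Pᵀ * K)) := by rw [← hSeq]
  have hmid : S⁻¹ * (Pᵀ * (K * (P * (S⁻¹ * (Pᵀ * K))))) = S⁻¹ * (Pᵀ * K) := by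
    rw [h1, ← Matrix.mul_assoc, hS'S, Matrix.one_mul]
  have hEW : E = Wᵀ * K * W := by
    rw [hWT, hWdef]
    simp only [Matrix.sub_mul, Matrix.mul_sub, Matrix.one_mul, Matrix.mul_one, Matrix.mul_assoc]
    rw [hmid, sub_self, sub_zero]
    rw [hEfull]
  have hEpsd : E.PosSemidef := by
    rw [hEW, ← real_conjTranspose_eq_transpose]
    exact hK.posSemidef.conjTranspose_mul_mul_same W
  have hPE : Pᵀ * E = 0 := by
    rw [hEfull, Matrix.mul_sub]
    have h2 : Pᵀ * (K * (P * (S⁻¹ * (Pᵀ * K)))) = Pᵀ * K := by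
      rw [h1, ← Matrix.mul_assoc, hSS, Matrix.one_mul]
    rw [h2, sub_self]
  have hE0 : ∀ (a : s) (j : Fin n), E (v a) j = 0 := by
    have h2 : E.submatrix v id = 0 := by rw [← oneSub_mul' E v, ← hPT, hPE]
    intro a j
    exact congrFun (congrFun h2 a) j
  have hLK : L * K = 1 := by
    rw [hKdef]; exact Matrix.mul_nonsing_inv L hL.det_pos.ne'.isUnit
  have hLE : L * E = 1 - P * (S⁻¹ * (Pᵀ * K)) := by
    rw [hEfull, Matrix.mul_sub, ← Matrix.mul_assoc, hLK, Matrix.one_mul]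
  have hblock : L.submatrix (Subtype.val : (sᶜ : Finset (Fin n)) → Fin n) (Subtype.val : (sᶜ : Finset (Fin n)) → Fin n) *
      E.submatrix (Subtype.val : (sᶜ : Finset (Fin n)) → Fin n) (Subtype.val : (sᶜ : Finset (Fin n)) → Fin n) = 1 := by
    ext a b
    rw [Matrix.mul_apply]
    simp only [Matrix.submatrix_apply]
    have hext : ∑ c : (sᶜ : Finset (Fin n)), L (a : Fin n) (c : Fin n) * E (c : Fin n) (b : Fin n)
        = ∑ i, L (a : Fin n) i * E i (b : Fin n) := by
      calc ∑ c : (sᶜ : Finset (Fin n)), L (a : Fin n) (c : Fin n) * E (c : Fin n) (b : Fin n)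
          = ∑ i ∈ (sᶜ : Finset (Fin n)), L (a : Fin n) i * E i (b : Fin n) :=
            Finset.sum_coe_sort (sᶜ : Finset (Fin n))
              (fun i => L (a : Fin n) i * E i (b : Fin n))
        _ = ∑ i, L (a : Fin n) i * E i (b : Fin n) :=
            Finset.sum_subset (Finset.subset_univ _) fun i _ hi => by
              have his : i ∈ s := by
                by_contra hcon
                exact hi (Finset.mem_compl.mpr hcon)
              rw [hE0 ⟨i, his⟩ (b : Fin n), mul_zero]
    rw [hext, ← Matrix.mul_apply, hLE, Matrix.sub_apply]
    have hP0 : (P * (S⁻¹ * (Pᵀ * K))) (a : Fin n) (b : Fin n) = 0 := by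
      rw [Matrix.mul_apply]
      refine Finset.sum_eq_zero fun c _ => ?_
      have hz : P (a : Fin n) c = 0 := by
        simp only [hPdef, Matrix.submatrix_apply, id_eq, Matrix.one_apply]
        rw [if_neg]
        intro hh
        have h1 : (a : Fin n) ∉ s := Finset.mem_compl.mp a.2
        exact h1 (by rw [hh]; exact c.2)
      rw [hz, zero_mul]
    rw [hP0, sub_zero, Matrix.one_apply, Matrix.one_apply]
    by_cases hab : a = b
    · simp [hab]
    · rw [if_neg fun hh => hab (Subtype.coe_injective hh), if_neg hab]
  have hinv : (L.submatrix (Subtype.val : (sᶜ : Finset (Fin n)) → Fin n) (Subtype.val : (sᶜ : Finset (Fin n)) → Fin n))⁻¹ =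
      E.submatrix (Subtype.val : (sᶜ : Finset (Fin n)) → Fin n) (Subtype.val : (sᶜ : Finset (Fin n)) → Fin n) :=
    Matrix.inv_eq_right_inv hblock
  rw [hinv]
  calc nuclearNorm E = E.trace := nuclearNorm_of_posSemidef hEpsd
    _ = Matrix.trace (E.submatrix (Subtype.val : (sᶜ : Finset (Fin n)) → Fin n) (Subtype.val : (sᶜ : Finset (Fin n)) → Fin n)) := by
        rw [Matrix.trace, Matrix.trace]
        calc ∑ i, E.diag i = ∑ i ∈ (sᶜ : Finset (Fin n)), E i i :=
              (Finset.sum_subset (Finset.subset_univ _) fun i _ hi => by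
                have his : i ∈ s := by
                  by_contra hcon
                  exact hi (Finset.mem_compl.mpr hcon)
                exact hE0 ⟨i, his⟩ i).symm
          _ = ∑ c : (sᶜ : Finset (Fin n)), E (c : Fin n) (c : Fin n) :=
              (Finset.sum_coe_sort (sᶜ : Finset (Fin n)) (fun i => E i i)).symm
          _ = ∑ c, (E.submatrix (Subtype.val : (sᶜ : Finset (Fin n)) → Fin n) (Subtype.val : (sᶜ : Finset (Fin n)) → Fin n)).diag c :=
              rfl
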